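/- Random variables (X̃_1, ..., X̃_p) are model-free knockoffs for (X_1, ..., X_p) (i.e., (X, X̃)_{swap(S)} =_d (X, X̃) for all S ⊆ {1,...,p}) if and only if for each j ∈ {1,...,p}, the pair (X_j, X̃_j) is exchangeable conditionally on all the other variables and their knockoffs (X_{-j}, X̃_{-j}). -/

import Mathlib

open MeasureTheory ProbabilityTheory

/-- The swap operation: exchange the coordinate `inl j` (original) with `inr j` (knockoff)
for each `j ∈ S`. -/
def knockoffSwap {p : ℕ} (S : Finset (Fin p)) (v : (Fin p ⊕ Fin p) → ℝ) :
    (Fin p ⊕ Fin p) → ℝ :=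
  Sum.elim (fun j => if j ∈ S then v (Sum.inr j) else v (Sum.inl j))
    (fun j => if j ∈ S then v (Sum.inl j) else v (Sum.inr j))

lemma knockoffSwap_measurable {p : ℕ} (S : Finset (Fin p)) :
    Measurable (knockoffSwap S) := by
  apply measurable_pi_lambda
  rintro (i | i) <;> dsimp [knockoffSwap] <;> split <;> exact measurable_pi_apply _

lemma knockoffSwap_empty {p : ℕ} : knockoffSwap (p := p) ∅ = id := by
  funext v x
  cases x <;> simp [knockoffSwap]

lemma knockoffSwap_insert {p : ℕ} {j : Fin p} {S : Finset (Fin p)} (hj : j ∉ S) :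
    knockoffSwap (insert j S) = knockoffSwap {j} ∘ knockoffSwap S := by
  funext v x
  rcases x with i | i <;>
  · by_cases hij : i = j
    · subst hij; simp [knockoffSwap, hj]
    · simp [knockoffSwap, hij, Finset.mem_insert]

/-- Auxiliary: pushing a compProd forward by a map on the second coordinate. -/
lemma map_prodMap_id_compProd {α β γ : Type*} {mα : MeasurableSpace α}
    {mβ : MeasurableSpace β} {mγ : MeasurableSpace γ}
    (ν : Measure α) [SFinite ν] (κ : ProbabilityTheory.Kernel α β) [IsSFiniteKernel κ]
    {g : β → γ} (hg : Measurable g) :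
    (ν ⊗ₘ κ).map (Prod.map id g) = ν ⊗ₘ (Kernel.map κ g) := by
  ext s hs
  rw [Measure.map_apply (measurable_id.prodMap hg) hs,
    Measure.compProd_apply ((measurable_id.prodMap hg) hs),
    Measure.compProd_apply hs]
  congr 1
  ext a
  rw [Kernel.map_apply' _ hg _ (measurable_prodMk_left hs)]
  rfl

/-- Core abstract lemma: the distribution of `(Z, Y)` is invariant under swapping the
two components of `Y` iff the conditional distribution of `Y` given `Z` is a.e.
swap-invariant. -/
lemma swap_invariant_iff_condDistrib {Ω : Type*} [MeasurableSpace Ω] {μ : Measure Ω}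
    [IsProbabilityMeasure μ] {γ : Type*} [MeasurableSpace γ]
    (Z : Ω → γ) (Y : Ω → ℝ × ℝ) (hZ : Measurable Z) (hY : Measurable Y) :
    μ.map (fun ω => (Z ω, Prod.swap (Y ω))) = μ.map (fun ω => (Z ω, Y ω))
    ↔ ∀ᵐ b ∂μ.map Z, condDistrib Y Z μ b = (condDistrib Y Z μ b).map Prod.swap := by
  set κ := condDistrib Y Z μ with hκ
  have hdis : μ.map (fun ω => (Z ω, Y ω)) = μ.map Z ⊗ₘ κ := by
    rw [hκ, condDistrib, ← Measure.fst_map_prodMk (X := Z) hY,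
      Measure.disintegrate]
  have hswap : μ.map (fun ω => (Z ω, Prod.swap (Y ω)))
      = μ.map Z ⊗ₘ (Kernel.map κ Prod.swap) := by
    have hcomp : (fun ω => (Z ω, Prod.swap (Y ω)))
        = (Prod.map id Prod.swap) ∘ (fun ω => (Z ω, Y ω)) := rfl
    rw [hcomp, ← Measure.map_map (measurable_id.prodMap measurable_swap) (hZ.prodMk hY),
      hdis, map_prodMap_id_compProd _ _ measurable_swap]
  constructor
  · intro h
    have h2 := condDistrib_ae_eq_of_measure_eq_compProd Z hY.aemeasurable (κ := Kernel.map κ Prod.swap)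
      (by rw [← h, hswap])
    filter_upwards [h2] with b hb
    rw [Kernel.map_apply _ measurable_swap] at hb
    exact hb
  · intro h
    rw [hswap, hdis]
    refine Measure.compProd_congr ?_
    filter_upwards [h] with b hb
    rw [Kernel.map_apply _ measurable_swap, ← hb]


/-- Split a full vector into (the other coordinates, the `j`-th pair). -/
def knockoffSplit {p : ℕ} (j : Fin p) (v : (Fin p ⊕ Fin p) → ℝ) :
    (({i : Fin p // i ≠ j} → ℝ) × ({i : Fin p // i ≠ j} → ℝ)) × (ℝ × ℝ) :=
  (((fun i : {i : Fin p // i ≠ j} => v (Sum.inl i.1)),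
    (fun i : {i : Fin p // i ≠ j} => v (Sum.inr i.1))), (v (Sum.inl j), v (Sum.inr j)))

/-- Inverse of `knockoffSplit`. -/
def knockoffJoin {p : ℕ} (j : Fin p)
    (q : (({i : Fin p // i ≠ j} → ℝ) × ({i : Fin p // i ≠ j} → ℝ)) × (ℝ × ℝ)) :
    (Fin p ⊕ Fin p) → ℝ :=
  Sum.elim (fun i => if h : i = j then q.2.1 else q.1.1 ⟨i, h⟩)
    (fun i => if h : i = j then q.2.2 else q.1.2 ⟨i, h⟩)

lemma knockoffSplit_measurable {p : ℕ} (j : Fin p) : Measurable (knockoffSplit j) := by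
  refine Measurable.prodMk (Measurable.prodMk ?_ ?_) (Measurable.prodMk ?_ ?_) <;>
    first
      | exact measurable_pi_lambda _ fun i => measurable_pi_apply _
      | exact measurable_pi_apply _

lemma knockoffJoin_measurable {p : ℕ} (j : Fin p) : Measurable (knockoffJoin j) := by
  apply measurable_pi_lambda
  rintro (i | i) <;> simp only [knockoffJoin, Sum.elim_inl, Sum.elim_inr] <;> split_ifs
  · exact measurable_fst.comp measurable_snd
  · exact (measurable_pi_apply _).comp (measurable_fst.comp measurable_fst)
  · exact measurable_snd.comp measurable_snd
  · exact (measurable_pi_apply _).comp (measurable_snd.comp measurable_fst)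

lemma knockoffJoin_split {p : ℕ} (j : Fin p) (v : (Fin p ⊕ Fin p) → ℝ) :
    knockoffJoin j (knockoffSplit j v) = v := by
  funext x
  rcases x with i | i <;> simp only [knockoffJoin, knockoffSplit, Sum.elim_inl, Sum.elim_inr] <;>
    split_ifs with h
  · subst h; rfl
  · rfl
  · subst h; rfl
  · rfl

lemma knockoffSplit_swap {p : ℕ} (j : Fin p) (v : (Fin p ⊕ Fin p) → ℝ) :
    knockoffSplit j (knockoffSwap {j} v) = Prod.map id Prod.swap (knockoffSplit j v) := by
  simp only [knockoffSplit, knockoffSwap, Prod.map, Prod.swap, Sum.elim_inl, Sum.elim_inr, id]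
  refine Prod.ext (Prod.ext ?_ ?_) (by simp)
  · funext i; simp [i.2]
  · funext i; simp [i.2]

/-- `X̃` is a model-free knockoff for `X` (i.e. `(X, X̃)_{swap(S)} =_d (X, X̃)` for all `S`)
if and only if for every `j` the pair `(X_j, X̃_j)` is exchangeable conditionally on all the
other variables and their knockoffs. -/
theorem knockoff_iff_conditionally_exchangeable_pairs
    {Ω : Type*} [MeasurableSpace Ω] {μ : Measure Ω} [IsProbabilityMeasure μ]
    {p : ℕ} (X Xt : Ω → Fin p → ℝ) (hX : Measurable X) (hXt : Measurable Xt) :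
    (∀ S : Finset (Fin p),
      μ.map (fun ω => knockoffSwap S (Sum.elim (X ω) (Xt ω)))
        = μ.map (fun ω => Sum.elim (X ω) (Xt ω)))
    ↔
    (∀ j : Fin p,
      ∀ᵐ b ∂(μ.map (fun ω =>
        ((fun i : {i : Fin p // i ≠ j} => X ω i.1),
         (fun i : {i : Fin p // i ≠ j} => Xt ω i.1)))),
        condDistrib (fun ω => (X ω j, Xt ω j))
          (fun ω => ((fun i : {i : Fin p // i ≠ j} => X ω i.1),
            (fun i : {i : Fin p // i ≠ j} => Xt ω i.1))) μ b
        = (condDistrib (fun ω => (X ω j, Xt ω j))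
            (fun ω => ((fun i : {i : Fin p // i ≠ j} => X ω i.1),
              (fun i : {i : Fin p // i ≠ j} => Xt ω i.1))) μ b).map Prod.swap) := by
  classical
  set F : Ω → (Fin p ⊕ Fin p) → ℝ := fun ω => Sum.elim (X ω) (Xt ω) with hF
  have hFmeas : Measurable F := by
    apply measurable_pi_lambda
    rintro (i | i)
    · exact (measurable_pi_apply i).comp hX
    · exact (measurable_pi_apply i).comp hXt
  -- singleton swaps suffice
  have hsingle : (∀ S : Finset (Fin p), μ.map (fun ω => knockoffSwap S (F ω)) = μ.map F)
      ↔ (∀ j : Fin p, μ.map (fun ω => knockoffSwap {j} (F ω)) = μ.map F) := by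
    constructor
    · intro h j; exact h {j}
    · intro h S
      induction S using Finset.induction_on with
      | empty => simp [knockoffSwap_empty]
      | insert _ _ hj =>
        rename_i j S' ih
        have : (fun ω => knockoffSwap (insert j S') (F ω))
            = knockoffSwap {j} ∘ (fun ω => knockoffSwap S' (F ω)) := by
          rw [knockoffSwap_insert hj]; rfl
        have hG : Measurable (fun ω => knockoffSwap S' (F ω)) :=
          (knockoffSwap_measurable S').comp hFmeas
        rw [this, ← Measure.map_map (knockoffSwap_measurable {j}) hG, ih,
          Measure.map_map (knockoffSwap_measurable {j}) hFmeas]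
        exact h j
  rw [hsingle]
  -- now fix j and reduce to the abstract lemma
  refine forall_congr' fun j => ?_
  set Z : Ω → ({i : Fin p // i ≠ j} → ℝ) × ({i : Fin p // i ≠ j} → ℝ) := fun ω =>
    ((fun i : {i : Fin p // i ≠ j} => X ω i.1), (fun i : {i : Fin p // i ≠ j} => Xt ω i.1))
    with hZ
  set Y : Ω → ℝ × ℝ := fun ω => (X ω j, Xt ω j) with hY
  have hZmeas : Measurable Z := by
    refine Measurable.prodMk ?_ ?_ <;>
      exact measurable_pi_lambda _ fun i => (measurable_pi_apply _).comp (by assumption)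
  have hYmeas : Measurable Y :=
    ((measurable_pi_apply j).comp hX).prodMk ((measurable_pi_apply j).comp hXt)
  set e := knockoffSplit j with he
  set einv := knockoffJoin j with heinv
  have hemeas : Measurable e := knockoffSplit_measurable j
  have heinvmeas : Measurable einv := knockoffJoin_measurable j
  have hinv : ∀ v, einv (e v) = v := knockoffJoin_split j
  have heF : e ∘ F = fun ω => (Z ω, Y ω) := rfl
  have heswap : ∀ v, e (knockoffSwap {j} v) = Prod.map id Prod.swap (e v) :=
    knockoffSplit_swap j
  have key : μ.map (fun ω => knockoffSwap {j} (F ω)) = μ.map F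
      ↔ μ.map (fun ω => (Z ω, Prod.swap (Y ω))) = μ.map (fun ω => (Z ω, Y ω)) := by
    have hcomp1 : (fun ω => (Z ω, Prod.swap (Y ω))) = e ∘ (fun ω => knockoffSwap {j} (F ω)) := by
      funext ω
      have := heswap (F ω)
      simp only [Function.comp_apply, this]
      rfl
    have hcomp2 : (fun ω => (Z ω, Y ω)) = e ∘ F := rfl
    have hGmeas : Measurable (fun ω => knockoffSwap ({j} : Finset (Fin p)) (F ω)) :=
      (knockoffSwap_measurable _).comp hFmeas
    have m1 : μ.map (e ∘ fun ω => knockoffSwap {j} (F ω))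
        = (μ.map (fun ω => knockoffSwap {j} (F ω))).map e :=
      (Measure.map_map hemeas hGmeas).symm
    have m2 : μ.map (e ∘ F) = (μ.map F).map e := (Measure.map_map hemeas hFmeas).symm
    constructor
    · intro h
      rw [hcomp1, hcomp2, m1, m2, h]
    · intro h
      rw [hcomp1, hcomp2, m1, m2] at h
      have h2 := congrArg (Measure.map einv) h
      rw [Measure.map_map heinvmeas hemeas, Measure.map_map heinvmeas hemeas] at h2
      have hid : einv ∘ e = id := funext hinv
      rw [hid, Measure.map_id, Measure.map_id] at h2
      exact h2
  rw [key]
  exact swap_invariant_iff_condDistrib Z Y hZmeas hYmeas
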